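/- Let F : Δ_A → [0,1]^K, let τ > 0, and let π*_τ ∈ Δ_A satisfy the τ-Tikhonov-regularized variational inequality (F(π*_τ) − τπ*_τ)ᵀ(π*_τ − π) ≥ 0 for all π ∈ Δ_A. Then π*_τ is a 2τ-MF-NE of F, i.e., ∑_a π*_τ(a) F(π*_τ, a) ≥ max_{π∈Δ_A} ∑_a π(a) F(π*_τ, a) − 2τ. -/

import Mathlib

open scoped BigOperators
open MeasureTheory ProbabilityTheory Finset

noncomputable section

/-- The probability simplex over `Fin K`, inside Euclidean space (ℓ2 norm). -/
def simplex (K : ℕ) : Set (EuclideanSpace ℝ (Fin K)) :=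
  {x | (∀ a, 0 ≤ x a) ∧ ∑ a, x a = 1}

/-- Empirical occupancy measure `μ̂ = (1/N) ∑_j e_{a^j}` of an action profile. -/
def empDist (K N : ℕ) (v : Fin N → Fin K) : EuclideanSpace ℝ (Fin K) :=
  (N : ℝ)⁻¹ • ∑ j : Fin N, EuclideanSpace.single (v j) (1 : ℝ)

/-- Expected payoff `V^i(π¹,…,π^N) = E[F(μ̂)(a^i)]`, written as the finite sum over
action profiles weighted by the product of the independent mixed strategies. -/
def Vval (K N : ℕ) (F : EuclideanSpace ℝ (Fin K) → EuclideanSpace ℝ (Fin K))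
    (π : Fin N → EuclideanSpace ℝ (Fin K)) (i : Fin N) : ℝ :=
  ∑ v : Fin N → Fin K, (∏ j : Fin N, π j (v j)) * F (empDist K N v) (v i)

/-- Exploitability `E^i_exp(π¹,…,π^N) = sup_{π′∈Δ} V^i(π′,π^{−i}) − V^i(π¹,…,π^N)`. -/
def expl (K N : ℕ) (F : EuclideanSpace ℝ (Fin K) → EuclideanSpace ℝ (Fin K))
    (π : Fin N → EuclideanSpace ℝ (Fin K)) (i : Fin N) : ℝ :=
  (⨆ p : simplex K, Vval K N F (Function.update π i (p : EuclideanSpace ℝ (Fin K))) i)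
    - Vval K N F π i

/-- If `π*_τ ∈ Δ_A` solves the `τ`-Tikhonov-regularized variational inequality
`(F(π*_τ) − τπ*_τ)ᵀ(π*_τ − π) ≥ 0` for all `π ∈ Δ_A`, then `π*_τ` is a `2τ`-MF-NE of `F`:
`∑_a π*_τ(a) F(π*_τ, a) ≥ max_{π∈Δ_A} ∑_a π(a) F(π*_τ, a) − 2τ`. -/
theorem stmt5 (K : ℕ) (hK : 0 < K) (τ : ℝ) (hτ : 0 < τ)
    (F : EuclideanSpace ℝ (Fin K) → EuclideanSpace ℝ (Fin K))
    (hFmap : ∀ μ ∈ simplex K, ∀ a : Fin K, F μ a ∈ Set.Icc (0 : ℝ) 1)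
    (πτ : EuclideanSpace ℝ (Fin K)) (hπτ : πτ ∈ simplex K)
    (hRVI : ∀ p ∈ simplex K, 0 ≤ ∑ a : Fin K, (F πτ a - τ * πτ a) * (πτ a - p a)) :
    (⨆ p : simplex K, ∑ a : Fin K, (p : EuclideanSpace ℝ (Fin K)) a * F πτ a) - 2 * τ
      ≤ ∑ a : Fin K, πτ a * F πτ a := by
  obtain ⟨hpos, hsum⟩ := hπτ
  -- key bound for every p in the simplex
  have key : ∀ p ∈ simplex K, ∑ a : Fin K, p a * F πτ a ≤ (∑ a : Fin K, πτ a * F πτ a) + 2 * τ := by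
    intro p hp
    obtain ⟨hppos, hpsum⟩ := hp
    have h1 := hRVI p ⟨hppos, hpsum⟩
    have expand : ∑ a : Fin K, (F πτ a - τ * πτ a) * (πτ a - p a)
        = (∑ a : Fin K, πτ a * F πτ a) - (∑ a : Fin K, p a * F πτ a)
          - τ * (∑ a : Fin K, πτ a * πτ a) + τ * (∑ a : Fin K, πτ a * p a) := by
      have h : ∀ a : Fin K, (F πτ a - τ * πτ a) * (πτ a - p a)
          = πτ a * F πτ a - p a * F πτ a - τ * (πτ a * πτ a) + τ * (πτ a * p a) := by
        intro a; ring
      simp_rw [h, Finset.sum_add_distrib, Finset.sum_sub_distrib, ← Finset.mul_sum]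
    have hπle1 : ∀ a : Fin K, πτ a ≤ 1 := by
      intro a
      calc πτ a ≤ ∑ b : Fin K, πτ b :=
        Finset.single_le_sum (fun b _ => hpos b) (Finset.mem_univ a)
      _ = 1 := hsum
    have h2 : ∑ a : Fin K, πτ a * p a ≤ 1 := by
      calc ∑ a : Fin K, πτ a * p a ≤ ∑ a : Fin K, p a := by
            apply Finset.sum_le_sum
            intro a _
            nlinarith [hpos a, hppos a, hπle1 a]
      _ = 1 := hpsum
    have h3 : 0 ≤ ∑ a : Fin K, πτ a * πτ a :=
      Finset.sum_nonneg (fun a _ => mul_nonneg (hpos a) (hpos a))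
    rw [expand] at h1
    nlinarith
  have hne : Nonempty (simplex K) := by
    refine ⟨⟨(WithLp.toLp 2 (fun _ => (K : ℝ)⁻¹) : EuclideanSpace ℝ (Fin K)), ?_, ?_⟩⟩
    · intro a; positivity
    · simp [Finset.sum_const, Finset.card_univ]
      field_simp
  have := ciSup_le (fun p : simplex K => key p.1 p.2)
  linarith
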